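/- arXiv:1310.4867 — 4 statements merged into one kernel-verified Lean document; each statement's English description precedes it below -/
import Mathlib

section
/- Let V be a vertex algebra and (W, Y_W) a V-module. For u, v ∈ V, w ∈ W, p, q ∈ ℤ, let l be a nonnegative integer such that u_n w = 0 for all n ≥ l, and let k be a nonnegative integer with k − q > 0 such that v_n w = 0 for all n ≥ k. Then u_p v_q w = Σ_{i=0}^{k−q−1} Σ_{j=0}^{l} C(p−l, i) C(l, j) (u_{p−l−i+j} v)_{q+l+i−j} w, where C denotes the (generalized) binomial coefficient and u_n = Res_x x^n Y(u,x). -/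
open scoped BigOperators

/-- Generalized binomial coefficient `C(a, i)` for `a : ℤ`, `i : ℕ`, valued in `ℂ`. -/
noncomputable def gb (a : ℤ) (i : ℕ) : ℂ :=
  (∏ j ∈ Finset.range i, ((a : ℂ) - (j : ℂ))) / (Nat.factorial i : ℂ)

lemma gb_zero (a : ℤ) : gb a 0 = 1 := by simp [gb]

lemma descPochhammer_eval_prod (r : ℂ) (n : ℕ) :
    (descPochhammer ℂ n).eval r = ∏ j ∈ Finset.range n, (r - j) := by
  induction n with
  | zero => simp
  | succ n ih => rw [descPochhammer_succ_eval, ih, Finset.prod_range_succ]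

lemma descPochhammer_smeval_complex (r : ℂ) (n : ℕ) :
    (descPochhammer ℤ n).smeval r = (descPochhammer ℂ n).eval r := by
  rw [Polynomial.descPochhammer_smeval_eq_ascPochhammer,
    Polynomial.ascPochhammer_smeval_eq_eval, descPochhammer_eval_eq_ascPochhammer]

lemma ringChoose_eq (r : ℂ) (n : ℕ) :
    Ring.choose r n = (∏ j ∈ Finset.range n, (r - j)) / (Nat.factorial n : ℂ) := by
  have h := Ring.descPochhammer_eq_factorial_smul_choose (R := ℂ) r n
  rw [descPochhammer_smeval_complex, descPochhammer_eval_prod] at h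
  have hf : (Nat.factorial n : ℂ) ≠ 0 := Nat.cast_ne_zero.mpr n.factorial_ne_zero
  rw [h, nsmul_eq_mul, mul_div_cancel_left₀ _ hf]

lemma gb_eq_choose (a : ℤ) (n : ℕ) : gb a n = Ring.choose ((a : ℂ)) n := by
  rw [ringChoose_eq, gb]

lemma gb_natCast (n j : ℕ) : gb (n : ℤ) j = (n.choose j : ℂ) := by
  rw [gb_eq_choose]
  push_cast
  rw [Ring.choose_natCast]

lemma gb_vandermonde (x y : ℤ) (m : ℕ) :
    ∑ i ∈ Finset.range (m + 1), gb x i * gb y (m - i) = gb (x + y) m := by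
  simp only [gb_eq_choose]
  rw [Int.cast_add, Ring.add_choose_eq _ (Commute.all _ _),
    Finset.Nat.sum_antidiagonal_eq_sum_range_succ_mk]

lemma gb_sub_one_self {m : ℕ} (h : 0 < m) : gb ((m : ℤ) - 1) m = 0 := by
  unfold gb
  rw [Finset.prod_eq_zero (Finset.mem_range.mpr (Nat.sub_lt h one_pos) : m - 1 ∈ Finset.range m)]
  · simp
  · push_cast [Nat.cast_sub h]
    ring

lemma diag_sum {M : Type*} [AddCommMonoid M] (N : ℕ) (F : ℕ → ℕ → M)
    (h : ∀ i j, N ≤ i + j → F i j = 0) :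
    ∑ i ∈ Finset.range N, ∑ j ∈ Finset.range N, F i j
      = ∑ m ∈ Finset.range N, ∑ i ∈ Finset.range (m + 1), F i (m - i) := by
  calc ∑ i ∈ Finset.range N, ∑ j ∈ Finset.range N, F i j
      = ∑ x ∈ Finset.range N ×ˢ Finset.range N, F x.1 x.2 := by
        rw [← Finset.sum_product']
    _ = ∑ x ∈ (Finset.range N ×ˢ Finset.range N).filter (fun p => p.1 + p.2 < N),
          F x.1 x.2 := by
        rw [Finset.sum_filter_of_ne
          (fun p _ hne => by by_contra hc; exact hne (h _ _ (le_of_not_gt hc)))]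
    _ = ∑ x ∈ (Finset.range N).sigma (fun m => Finset.range (m + 1)), F x.2 (x.1 - x.2) := ?_
    _ = ∑ m ∈ Finset.range N, ∑ i ∈ Finset.range (m + 1), F i (m - i) :=
        Finset.sum_sigma _ _ _
  refine Finset.sum_bij' (fun p _ => ⟨p.1 + p.2, p.1⟩)
    (fun x _ => (x.2, x.1 - x.2)) ?_ ?_ ?_ ?_ ?_
  · intro p hp
    simp only [Finset.mem_filter, Finset.mem_product, Finset.mem_range] at hp
    simp only [Finset.mem_sigma, Finset.mem_range]
    omega
  · intro x hx
    simp only [Finset.mem_sigma, Finset.mem_range] at hx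
    simp only [Finset.mem_filter, Finset.mem_product, Finset.mem_range]
    omega
  · intro p hp; simp
  · intro x hx
    simp only [Finset.mem_sigma, Finset.mem_range] at hx
    ext <;> simp <;> omega
  · intro p hp; simp

/-- A vertex algebra, presented through the coefficient operators
`coeff u n = u_n = Res_x x^n Y(u,x)` of its vertex operator map, together with the
vacuum, truncation, creation and Borcherds (Jacobi) identity axioms. -/
structure VertexAlgebra (V : Type*) [AddCommGroup V] [Module ℂ V] where
  coeff : V → ℤ → V →ₗ[ℂ] V
  coeff_add : ∀ (u v : V) (n : ℤ), coeff (u + v) n = coeff u n + coeff v n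
  coeff_smul : ∀ (c : ℂ) (u : V) (n : ℤ), coeff (c • u) n = c • coeff u n
  vac : V
  vac_coeff_neg_one : ∀ v : V, coeff vac (-1) v = v
  vac_coeff : ∀ n : ℤ, n ≠ -1 → coeff vac n = 0
  trunc : ∀ u v : V, ∃ N : ℤ, ∀ n ≥ N, coeff u n v = 0
  creation : ∀ (u : V) (n : ℤ), 0 ≤ n → coeff u n vac = 0
  create_neg_one : ∀ u : V, coeff u (-1) vac = u
  borcherds : ∀ (u v w : V) (p q r : ℤ),
    (∑ᶠ i : ℕ, gb p i • coeff (coeff u (r + i) v) (p + q - i) w) =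
    ∑ᶠ i : ℕ, ((-1 : ℂ) ^ i * gb r i) •
      (coeff u (p + r - i) (coeff v (q + i) w)
        - ((-1 : ℂ) ^ r) • coeff v (q + r - i) (coeff u (p + i) w))

/-- A module for a vertex algebra, presented through the coefficient operators
`Yw u n = u_n = Res_x x^n Y_W(u,x)`, with weak associativity (in coefficient form:
for every `a b : ℤ`, the coefficient of `x₀^a x₂^b` in
`(x₀+x₂)^l Y_W(u,x₀+x₂) Y_W(v,x₂) w` equals that in `(x₀+x₂)^l Y_W(Y(u,x₀)v,x₂) w`,
where `(x₀+x₂)^n` is expanded in nonnegative powers of `x₂`) as the main axiom. -/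
structure VAModule {V : Type*} [AddCommGroup V] [Module ℂ V] (A : VertexAlgebra V)
    (W : Type*) [AddCommGroup W] [Module ℂ W] where
  Yw : V → ℤ → W →ₗ[ℂ] W
  Yw_add : ∀ (u v : V) (n : ℤ), Yw (u + v) n = Yw u n + Yw v n
  Yw_smul : ∀ (c : ℂ) (u : V) (n : ℤ), Yw (c • u) n = c • Yw u n
  vac_neg_one : ∀ w : W, Yw A.vac (-1) w = w
  vac_ne : ∀ n : ℤ, n ≠ -1 → Yw A.vac n = 0
  trunc : ∀ (u : V) (w : W), ∃ N : ℤ, ∀ n ≥ N, Yw u n w = 0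
  weak_assoc : ∀ (u v : V) (w : W) (l : ℕ),
    (∀ n : ℤ, (l : ℤ) ≤ n → Yw u n w = 0) →
    ∀ a b : ℤ,
      (∑ᶠ j : ℕ, gb (a + j) j • Yw u ((l : ℤ) - 1 - a - j) (Yw v ((j : ℤ) - b - 1) w)) =
      ∑ j ∈ Finset.range (l + 1),
        gb l j • Yw (A.coeff u ((l : ℤ) - j - a - 1) v) ((j : ℤ) - b - 1) w

/-- Proposition 2.1: for a module `(W, Y_W)` over a vertex algebra `V`,
if `u_n w = 0` for `n ≥ l` and `v_n w = 0` for `n ≥ k` with `k - q > 0`, then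
`u_p v_q w = Σ_{i=0}^{k-q-1} Σ_{j=0}^{l} C(p-l,i) C(l,j) (u_{p-l-i+j} v)_{q+l+i-j} w`. -/
theorem statement0 {V W : Type*} [AddCommGroup V] [Module ℂ V]
    [AddCommGroup W] [Module ℂ W] (A : VertexAlgebra V) (Wm : VAModule A W)
    (u v : V) (w : W) (p q : ℤ) (l k : ℕ)
    (hl : ∀ n : ℤ, (l : ℤ) ≤ n → Wm.Yw u n w = 0)
    (hk : ∀ n : ℤ, (k : ℤ) ≤ n → Wm.Yw v n w = 0)
    (hkq : q < (k : ℤ)) :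
    Wm.Yw u p (Wm.Yw v q w) =
      ∑ i ∈ Finset.range ((k : ℤ) - q).toNat, ∑ j ∈ Finset.range (l + 1),
        (gb (p - (l : ℤ)) i * gb (l : ℤ) j) •
          Wm.Yw (A.coeff u (p - (l : ℤ) - i + j) v) (q + (l : ℤ) + i - j) w := by
  have hN : ((((k : ℤ) - q).toNat : ℤ)) = (k : ℤ) - q := Int.toNat_of_nonneg (by omega)
  set N : ℕ := ((k : ℤ) - q).toNat with hNdef
  have hN1 : 0 < N := by omega
  set T : ℕ → W := fun m => Wm.Yw u (p - m) (Wm.Yw v (q + m) w) with hT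
  -- vanishing of T beyond the diagonal
  have hTzero : ∀ m : ℕ, N ≤ m → T m = 0 := by
    intro m hm
    simp only [hT]
    rw [hk (q + m) (by omega), map_zero]
  -- the key consequence of weak associativity
  have key : ∀ i : ℕ,
      (∑ j ∈ Finset.range N, gb ((l : ℤ) - p - 1 + (i + j)) j • T (i + j)) =
      ∑ j ∈ Finset.range (l + 1),
        gb (l : ℤ) j • Wm.Yw (A.coeff u (p - (i : ℤ) - j) v) (q + (i : ℤ) + j) w := by
    intro i
    have H := Wm.weak_assoc u v w l hl ((l : ℤ) - p + i - 1) (-q - (i : ℤ) - 1)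
    have hfin : (∑ᶠ j : ℕ, gb (((l : ℤ) - p + i - 1) + j) j •
        Wm.Yw u ((l : ℤ) - 1 - ((l : ℤ) - p + i - 1) - j)
          (Wm.Yw v ((j : ℤ) - (-q - (i : ℤ) - 1) - 1) w)) =
        ∑ j ∈ Finset.range N, gb (((l : ℤ) - p + i - 1) + j) j •
          Wm.Yw u ((l : ℤ) - 1 - ((l : ℤ) - p + i - 1) - j)
            (Wm.Yw v ((j : ℤ) - (-q - (i : ℤ) - 1) - 1) w) := by
      apply finsum_eq_sum_of_support_subset
      intro j hj
      simp only [Function.mem_support, ne_eq] at hj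
      simp only [Finset.coe_range, Set.mem_Iio]
      by_contra hc
      push_neg at hc
      apply hj
      rw [hk ((j : ℤ) - (-q - (i : ℤ) - 1) - 1) (by omega), map_zero, smul_zero]
    rw [hfin] at H
    calc (∑ j ∈ Finset.range N, gb ((l : ℤ) - p - 1 + (i + j)) j • T (i + j))
        = ∑ j ∈ Finset.range N, gb (((l : ℤ) - p + i - 1) + j) j •
            Wm.Yw u ((l : ℤ) - 1 - ((l : ℤ) - p + i - 1) - j)
              (Wm.Yw v ((j : ℤ) - (-q - (i : ℤ) - 1) - 1) w) := by
          refine Finset.sum_congr rfl fun j _ => ?_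
          have e1 : (l : ℤ) - p - 1 + (i + j) = ((l : ℤ) - p + i - 1) + j := by ring
          have e2 : p - ((i + j : ℕ) : ℤ) = (l : ℤ) - 1 - ((l : ℤ) - p + i - 1) - j := by
            push_cast; ring
          have e3 : q + ((i + j : ℕ) : ℤ) = (j : ℤ) - (-q - (i : ℤ) - 1) - 1 := by
            push_cast; ring
          simp only [hT, e1, e2, e3]
      _ = ∑ j ∈ Finset.range (l + 1),
            gb (l : ℤ) j • Wm.Yw (A.coeff u ((l : ℤ) - j - ((l : ℤ) - p + i - 1) - 1) v)
              ((j : ℤ) - (-q - (i : ℤ) - 1) - 1) w := H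
      _ = ∑ j ∈ Finset.range (l + 1),
            gb (l : ℤ) j • Wm.Yw (A.coeff u (p - (i : ℤ) - j) v) (q + (i : ℤ) + j) w := by
          refine Finset.sum_congr rfl fun j _ => ?_
          have e2 : (l : ℤ) - j - ((l : ℤ) - p + i - 1) - 1 = p - (i : ℤ) - j := by ring
          have e3 : (j : ℤ) - (-q - (i : ℤ) - 1) - 1 = q + (i : ℤ) + j := by ring
          rw [e2, e3]
  -- sum the key identity against gb (p - l) i
  have main : ∑ i ∈ Finset.range N, gb (p - (l : ℤ)) i •
        (∑ j ∈ Finset.range N, gb ((l : ℤ) - p - 1 + (i + j)) j • T (i + j)) =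
      ∑ i ∈ Finset.range N, gb (p - (l : ℤ)) i •
        ∑ j ∈ Finset.range (l + 1),
          gb (l : ℤ) j • Wm.Yw (A.coeff u (p - (i : ℤ) - j) v) (q + (i : ℤ) + j) w :=
    Finset.sum_congr rfl fun i _ => by rw [key i]
  -- evaluate the left-hand side of `main`
  have lhs_eq : ∑ i ∈ Finset.range N, gb (p - (l : ℤ)) i •
        (∑ j ∈ Finset.range N, gb ((l : ℤ) - p - 1 + (i + j)) j • T (i + j)) =
      Wm.Yw u p (Wm.Yw v q w) := by
    have h1 : ∀ i ∈ Finset.range N, gb (p - (l : ℤ)) i •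
          (∑ j ∈ Finset.range N, gb ((l : ℤ) - p - 1 + (i + j)) j • T (i + j)) =
        ∑ j ∈ Finset.range N,
          (gb (p - (l : ℤ)) i * gb ((l : ℤ) - p - 1 + (i + j)) j) • T (i + j) := by
      intro i _
      rw [Finset.smul_sum]
      exact Finset.sum_congr rfl fun j _ => (smul_smul _ _ _)
    rw [Finset.sum_congr rfl h1]
    rw [diag_sum N (fun i j => (gb (p - (l : ℤ)) i * gb ((l : ℤ) - p - 1 + (i + j)) j) • T (i + j))
      (fun i j hij =>
        show (gb (p - (l : ℤ)) i * gb ((l : ℤ) - p - 1 + (i + j)) j) • T (i + j) = 0 from by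
          rw [hTzero _ hij, smul_zero])]
    have h2 : ∀ m ∈ Finset.range N,
        (∑ i ∈ Finset.range (m + 1),
          (gb (p - (l : ℤ)) i *
            gb ((l : ℤ) - p - 1 + ((i : ℤ) + ((m - i : ℕ) : ℤ))) (m - i)) • T (i + (m - i))) =
        gb ((m : ℤ) - 1) m • T m := by
      intro m _
      have h3 : ∀ i ∈ Finset.range (m + 1),
          (gb (p - (l : ℤ)) i *
            gb ((l : ℤ) - p - 1 + ((i : ℤ) + ((m - i : ℕ) : ℤ))) (m - i)) • T (i + (m - i)) =
          (gb (p - (l : ℤ)) i * gb ((l : ℤ) - p - 1 + m) (m - i)) • T m := by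
        intro i hi
        rw [Finset.mem_range] at hi
        have him : i + (m - i) = m := by omega
        have hc : (i : ℤ) + ((m - i : ℕ) : ℤ) = (m : ℤ) := by omega
        rw [him, hc]
      rw [Finset.sum_congr rfl h3, ← Finset.sum_smul, gb_vandermonde]
      congr 2
      ring
    rw [Finset.sum_congr rfl h2]
    rw [Finset.sum_eq_single_of_mem 0 (Finset.mem_range.mpr hN1)
      (fun m _ hm => by rw [gb_sub_one_self (Nat.pos_of_ne_zero hm), zero_smul])]
    simp [hT, gb]
  -- evaluate the right-hand side of `main`
  have rhs_eq : ∑ i ∈ Finset.range N, gb (p - (l : ℤ)) i •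
        (∑ j ∈ Finset.range (l + 1),
          gb (l : ℤ) j • Wm.Yw (A.coeff u (p - (i : ℤ) - j) v) (q + (i : ℤ) + j) w) =
      ∑ i ∈ Finset.range N, ∑ j ∈ Finset.range (l + 1),
        (gb (p - (l : ℤ)) i * gb (l : ℤ) j) •
          Wm.Yw (A.coeff u (p - (l : ℤ) - i + j) v) (q + (l : ℤ) + i - j) w := by
    refine Finset.sum_congr rfl fun i _ => ?_
    rw [Finset.smul_sum]
    rw [← Finset.sum_range_reflect
      (fun j => gb (p - (l : ℤ)) i • (gb (l : ℤ) j •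
        Wm.Yw (A.coeff u (p - (i : ℤ) - j) v) (q + (i : ℤ) + j) w)) (l + 1)]
    refine Finset.sum_congr rfl fun j hj => ?_
    rw [Finset.mem_range] at hj
    have hjl : j ≤ l := by omega
    have e0 : l + 1 - 1 - j = l - j := by omega
    rw [e0]
    have e1 : gb (l : ℤ) (l - j) = gb (l : ℤ) j := by
      rw [gb_natCast, gb_natCast, Nat.choose_symm hjl]
    have e2 : p - (i : ℤ) - ((l - j : ℕ) : ℤ) = p - (l : ℤ) - i + j := by
      rw [Nat.cast_sub hjl]; ring
    have e3 : q + (i : ℤ) + ((l - j : ℕ) : ℤ) = q + (l : ℤ) + i - j := by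
      rw [Nat.cast_sub hjl]; ring
    rw [e1, e2, e3, smul_smul]
  rw [← lhs_eq, main, rhs_eq]
end

section
/- Let V be a vertex algebra and (W, Y_W) a V-module satisfying weak associativity. Let u, v ∈ V, w ∈ W, p, q ∈ ℤ, and let l, k be nonnegative integers such that u_n w = 0 for n ≥ l and v_n w = 0 for n ≥ k. Then for every integer i ≥ k − q, Res_{x_0} Res_{x_2} x_0^{p−l−i} x_2^{q+i} (x_0+x_2)^l Y_W(Y(u,x_0)v, x_2) w = 0. -/
open scoped BigOperators

/-- for a module `(W, Y_W)` over a vertex algebra satisfying weak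
associativity, with `u_n w = 0` for `n ≥ l` and `v_n w = 0` for `n ≥ k`, for every
integer `i ≥ k - q` one has
`Res_{x₀} Res_{x₂} x₀^{p-l-i} x₂^{q+i} (x₀+x₂)^l Y_W(Y(u,x₀)v, x₂) w = 0`; in
component form, `Σ_{j=0}^{l} C(l,j) (u_{p-i-j} v)_{q+i+j} w = 0`. -/
theorem statement3 {V W : Type*} [AddCommGroup V] [Module ℂ V]
    [AddCommGroup W] [Module ℂ W] (A : VertexAlgebra V) (Wm : VAModule A W)
    (u v : V) (w : W) (p q : ℤ) (l k : ℕ)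
    (hl : ∀ n : ℤ, (l : ℤ) ≤ n → Wm.Yw u n w = 0)
    (hk : ∀ n : ℤ, (k : ℤ) ≤ n → Wm.Yw v n w = 0)
    (i : ℤ) (hi : (k : ℤ) - q ≤ i) :
    ∑ j ∈ Finset.range (l + 1),
      gb (l : ℤ) j • Wm.Yw (A.coeff u (p - i - j) v) (q + i + j) w = 0 := by
  have h := Wm.weak_assoc u v w l hl ((l : ℤ) - 1 - p + i) (-q - i - 1)
  have hz : (∑ᶠ j : ℕ, gb (((l : ℤ) - 1 - p + i) + j) j •
      Wm.Yw u ((l : ℤ) - 1 - ((l : ℤ) - 1 - p + i) - j)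
        (Wm.Yw v ((j : ℤ) - (-q - i - 1) - 1) w)) = 0 := by
    have : ∀ j : ℕ, gb (((l : ℤ) - 1 - p + i) + j) j •
        Wm.Yw u ((l : ℤ) - 1 - ((l : ℤ) - 1 - p + i) - j)
          (Wm.Yw v ((j : ℤ) - (-q - i - 1) - 1) w) = 0 := by
      intro j
      rw [hk ((j : ℤ) - (-q - i - 1) - 1) (by omega)]
      simp
    simp only [this, finsum_zero]
  rw [hz] at h
  rw [← h.symm]
  apply Finset.sum_congr rfl
  intro j _
  have e1 : p - i - (j:ℤ) = (l:ℤ) - j - ((l:ℤ) - 1 - p + i) - 1 := by omega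
  have e2 : q + i + (j:ℤ) = (j:ℤ) - (-q - i - 1) - 1 := by omega
  rw [e1, e2]
end

section
/- Let V be an ℕ-graded vertex algebra and (W, Y_W) an ℕ-gradable weak V-module with homogeneous u, v ∈ V and homogeneous w ∈ W. Set K = p + q + 2 − wt u − wt v. Then for every integer m ≤ K − 2 deg w − 2, Σ_{j=0}^{wt u + deg w} C(wt u + deg w, j) (u_{j+m} v)_{K + wt u + wt v − j − m − 2} w = 0. -/
open scoped BigOperators

/-- A ℤ-graded vertex algebra: a vertex algebra with an internal direct sum
decomposition `V = ⨁_{n∈ℤ} V_(n)` compatible with the vertex operator coefficients: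
`u_n` maps `V_(k)` to `V_(k + m - n - 1)` for `u ∈ V_(m)`. -/
structure GradedVA (V : Type*) [AddCommGroup V] [Module ℂ V] extends VertexAlgebra V where
  gr : ℤ → Submodule ℂ V
  internal : DirectSum.IsInternal gr
  vac_mem : vac ∈ gr 0
  coeff_grade : ∀ {m : ℤ} {u : V}, u ∈ gr m → ∀ (n : ℤ) {k : ℤ} {v : V}, v ∈ gr k →
    coeff u n v ∈ gr (k + m - n - 1)

/-- An ℕ-graded vertex algebra: `V_(n) = 0` for `n < 0`. -/
def GradedVA.IsNNGraded {V : Type*} [AddCommGroup V] [Module ℂ V] (A : GradedVA V) : Prop :=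
  ∀ n : ℤ, n < 0 → A.gr n = ⊥

/-- The property that a family of coefficient operators `Yw u n = u_n` defines a weak
module structure over the vertex algebra `A` on `W`: linearity in `u`, lower
truncation, the vacuum property `Y_W(1,x) = id`, and the Borcherds (Jacobi) identity. -/
def IsWeakModule {V W : Type*} [AddCommGroup V] [Module ℂ V] [AddCommGroup W] [Module ℂ W]
    (A : VertexAlgebra V) (Yw : V → ℤ → W →ₗ[ℂ] W) : Prop :=
  (∀ (u v : V) (n : ℤ), Yw (u + v) n = Yw u n + Yw v n) ∧
  (∀ (c : ℂ) (u : V) (n : ℤ), Yw (c • u) n = c • Yw u n) ∧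
  (∀ (u : V) (w : W), ∃ N : ℤ, ∀ n ≥ N, Yw u n w = 0) ∧
  (∀ w : W, Yw A.vac (-1) w = w) ∧
  (∀ n : ℤ, n ≠ -1 → Yw A.vac n = 0) ∧
  (∀ (u v : V) (w : W) (p q r : ℤ),
    (∑ᶠ i : ℕ, gb p i • Yw (A.coeff u (r + i) v) (p + q - i) w) =
    ∑ᶠ i : ℕ, ((-1 : ℂ) ^ i * gb r i) •
      (Yw u (p + r - i) (Yw v (q + i) w)
        - ((-1 : ℂ) ^ r) • Yw v (q + r - i) (Yw u (p + i) w)))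

/-- An ℕ-grading on a weak module: an internal direct sum `W = ⨁ W_(n)` with
`W_(n) = 0` for `n < 0` and `u_n : W_(k) → W_(k + m - n - 1)` for `u ∈ V_(m)`. -/
def IsNNGradedModule {V W : Type*} [AddCommGroup V] [Module ℂ V] [AddCommGroup W]
    [Module ℂ W] (A : GradedVA V) (Yw : V → ℤ → W →ₗ[ℂ] W)
    (wgr : ℤ → Submodule ℂ W) : Prop :=
  DirectSum.IsInternal wgr ∧ (∀ n : ℤ, n < 0 → wgr n = ⊥) ∧
  (∀ {m : ℤ} {u : V}, u ∈ A.gr m → ∀ (n : ℤ) {k : ℤ} {w : W}, w ∈ wgr k →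
    Yw u n w ∈ wgr (k + m - n - 1))


lemma gb_eq_zero {a : ℤ} {n : ℕ} (h : a = (n : ℤ)) {i : ℕ} (hn : n < i) : gb a i = 0 := by
  unfold gb
  rw [Finset.prod_eq_zero (Finset.mem_range.mpr hn) (by subst h; push_cast; ring)]
  simp

/-- Remark 2.5, component form: let `V` be an ℕ-graded vertex algebra and
`(W, Y_W)` an ℕ-gradable weak `V`-module, `u ∈ V_(wu)`, `v ∈ V_(wv)` homogeneous and
`w ∈ W_(dw)` homogeneous. With `K = p + q + 2 - wu - wv`, for every integer
`m ≤ K - 2 dw - 2`,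
`Σ_{j=0}^{wu+dw} C(wu+dw, j) (u_{j+m} v)_{K + wu + wv - j - m - 2} w = 0`. -/
theorem statement6 {V W : Type*} [AddCommGroup V] [Module ℂ V]
    [AddCommGroup W] [Module ℂ W] (A : GradedVA V) (hA : A.IsNNGraded)
    (Yw : V → ℤ → W →ₗ[ℂ] W) (wgr : ℤ → Submodule ℂ W)
    (hW : IsWeakModule A.toVertexAlgebra Yw)
    (hWgr : IsNNGradedModule A Yw wgr)
    (wu wv dw : ℕ) (u v : V) (w : W)
    (hu : u ∈ A.gr (wu : ℤ)) (hv : v ∈ A.gr (wv : ℤ)) (hw : w ∈ wgr (dw : ℤ))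
    (p q : ℤ) :
    ∀ m : ℤ, m ≤ (p + q + 2 - (wu : ℤ) - (wv : ℤ)) - 2 * (dw : ℤ) - 2 →
      ∑ j ∈ Finset.range (wu + dw + 1),
        gb ((wu : ℤ) + (dw : ℤ)) j •
          Yw (A.coeff u ((j : ℤ) + m) v)
            ((p + q + 2 - (wu : ℤ) - (wv : ℤ)) + (wu : ℤ) + (wv : ℤ) - j - m - 2) w = 0 := by
  obtain ⟨hint, hneg, hgrade⟩ := hWgr
  intro m hm
  have hzeroW : ∀ {k : ℤ} {x : V}, x ∈ A.gr k → ∀ (n : ℤ) {d : ℤ} {w' : W}, w' ∈ wgr d →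
      d + k - n - 1 < 0 → Yw x n w' = 0 := by
    intro k x hx n d w' hw' hd
    have h1 := hgrade hx n hw'
    rw [hneg _ hd] at h1
    simpa using h1
  have hbor := hW.2.2.2.2.2 u v w ((wu : ℤ) + (dw : ℤ)) (p + q - m - (wu : ℤ) - (dw : ℤ)) m
  have hterm : ∀ i : ℕ, ((-1 : ℂ) ^ i * gb m i) •
      (Yw u ((wu : ℤ) + (dw : ℤ) + m - i) (Yw v ((p + q - m - (wu : ℤ) - (dw : ℤ)) + i) w)
        - ((-1 : ℂ) ^ m) • Yw v ((p + q - m - (wu : ℤ) - (dw : ℤ)) + m - i)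
            (Yw u ((wu : ℤ) + (dw : ℤ) + i) w)) = 0 := by
    intro i
    have h1 : Yw v ((p + q - m - (wu : ℤ) - (dw : ℤ)) + i) w = 0 := hzeroW hv _ hw (by omega)
    have h2 : Yw u ((wu : ℤ) + (dw : ℤ) + i) w = 0 := hzeroW hu _ hw (by omega)
    rw [h1, h2]
    simp
  have hL : (∑ᶠ i : ℕ, gb ((wu : ℤ) + (dw : ℤ)) i • Yw (A.coeff u (m + i) v)
      (((wu : ℤ) + (dw : ℤ)) + (p + q - m - (wu : ℤ) - (dw : ℤ)) - i) w) = 0 :=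
    hbor.trans ((finsum_congr hterm).trans finsum_zero)
  have hfin : (∑ᶠ i : ℕ, gb ((wu : ℤ) + (dw : ℤ)) i • Yw (A.coeff u (m + i) v)
      (((wu : ℤ) + (dw : ℤ)) + (p + q - m - (wu : ℤ) - (dw : ℤ)) - i) w)
      = ∑ j ∈ Finset.range (wu + dw + 1),
        gb ((wu : ℤ) + (dw : ℤ)) j •
          Yw (A.coeff u ((j : ℤ) + m) v)
            ((p + q + 2 - (wu : ℤ) - (wv : ℤ)) + (wu : ℤ) + (wv : ℤ) - j - m - 2) w := by
    refine (finsum_eq_finset_sum_of_support_subset _ ?_).trans (Finset.sum_congr rfl ?_)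
    · intro i hi
      simp only [Function.mem_support] at hi
      simp only [Finset.coe_range, Set.mem_Iio]
      by_contra h
      push_neg at h
      exact hi (by rw [gb_eq_zero (n := wu + dw) (by push_cast; ring) (by omega)]; simp)
    · intro j hj
      rw [show m + (j : ℤ) = (j : ℤ) + m from by ring,
        show ((wu : ℤ) + (dw : ℤ)) + (p + q - m - (wu : ℤ) - (dw : ℤ)) - (j : ℤ)
          = (p + q + 2 - (wu : ℤ) - (wv : ℤ)) + (wu : ℤ) + (wv : ℤ) - j - m - 2 from by ring]
  rw [← hfin]
  exact hL
end

section
/- For integers K, N with N ≥ 0, let q_2(y_0, y_2) = Σ_{i=0}^{N} C(N−1, i) y_0^{N−1−i} y_2^{i}. Then q_2(y y_2, y_2) = y_2^{N−1} q_2(y, 1) as formal Laurent polynomials, and for any integer n ≤ −N−2, the largest power of y appearing in (−y + x_1)^n q_2(y, 1) (y+1)^{−N−1−n} (expanded as a formal power series in x_1 with Laurent coefficients in y, and (y+1)^{−N−1−n} expanded in nonnegative powers of y) is at most −2. -/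
open scoped BigOperators

/-- for `N ≥ 0` let `q₂(y₀,y₂) = Σ_{i=0}^{N} C(N-1,i) y₀^{N-1-i} y₂^i`.
Then (1) `q₂(y y₂, y₂) = y₂^{N-1} q₂(y,1)` (as an identity of coefficient functions
in the variables `y, y₂`), and (2) for any integer `n ≤ -N-2`, every coefficient of
`y^a x₁^j` with `a ≥ -1` in the expansion of `(-y+x₁)^n q₂(y,1) (y+1)^{-N-1-n}`
(with `(-y+x₁)^n` expanded in nonnegative powers of `x₁` and `(y+1)^{-N-1-n}` a
polynomial in `y`) vanishes, i.e. the largest power of `y` occurring is at most `-2`. -/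
theorem statement15 (K : ℤ) (N : ℕ) :
    -- (1) `q₂(y y₂, y₂) = y₂^{N-1} q₂(y, 1)` coefficientwise
    (∀ a b : ℤ,
      (∑ i ∈ Finset.range (N + 1),
        if a = (N : ℤ) - 1 - i ∧ b = (N : ℤ) - 1 then gb ((N : ℤ) - 1) i else 0) =
      (if b = (N : ℤ) - 1 then (1 : ℂ) else 0) *
        ∑ i ∈ Finset.range (N + 1),
          if a = (N : ℤ) - 1 - i then gb ((N : ℤ) - 1) i else 0) ∧
    -- (2) the coefficient of `y^a x₁^j` in `(-y+x₁)^n q₂(y,1) (y+1)^{-N-1-n}`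
    -- vanishes whenever `a ≥ -1`
    (∀ n : ℤ, n ≤ -(N : ℤ) - 2 → ∀ a : ℤ, -1 ≤ a → ∀ j : ℕ,
      (∑ i ∈ Finset.range (N + 1), ∑ s ∈ Finset.range ((-(N : ℤ) - 1 - n).toNat + 1),
        if (n - (j : ℤ)) + ((N : ℤ) - 1 - i) + (s : ℤ) = a then
          gb n j * (-1 : ℂ) ^ (n - (j : ℤ)) * gb ((N : ℤ) - 1) i * gb (-(N : ℤ) - 1 - n) s
        else 0) = 0) := by
  constructor
  · intro a b
    by_cases hb : b = (N : ℤ) - 1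
    · rw [if_pos hb, one_mul]
      apply Finset.sum_congr rfl
      intro i _
      simp [hb]
    · rw [if_neg hb, zero_mul]
      apply Finset.sum_eq_zero
      intro i _
      rw [if_neg (by tauto)]
  · intro n hn a ha j
    apply Finset.sum_eq_zero
    intro i hi
    apply Finset.sum_eq_zero
    intro s hs
    rw [if_neg]
    simp only [Finset.mem_range] at hi hs
    have h1 : (s : ℤ) ≤ -(N : ℤ) - 1 - n := by
      have := Int.toNat_of_nonneg (by omega : (0:ℤ) ≤ -(N : ℤ) - 1 - n)
      omega
    omega
end
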